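/- Let (x,y) be a feasible solution of the LP DS with objective value R for a finite weighted graph G. Then there exists a threshold r > 0 such that the set V(r) = {u : x_u ≥ r} is nonempty and the total weight of edges with y-value at least r satisfies Σ_{uv : y_{uv} ≥ r} g(uv) ≥ R·|V(r)|. -/

import Mathlib

open Finset Real

noncomputable section

variable {V : Type*}

/-- The out-degree of `u` in a fractional orientation `o`. -/
def outdeg [Fintype V] (o : V → V → ℝ) (u : V) : ℝ := ∑ x : V, o u x

/-- `o` is a fractional orientation of the weighted graph `(G, w)`:
nonnegative values on directed edge-halves, supported on edges, summing to the edge weight. -/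
def IsOrientation [Fintype V] (G : SimpleGraph V) (w : V → V → ℝ) (o : V → V → ℝ) : Prop :=
  (∀ u v, 0 ≤ o u v) ∧ (∀ u v, ¬ G.Adj u v → o u v = 0) ∧
    (∀ u v, G.Adj u v → o u v + o v u = w u v)

/-- A fractional orientation is locally fair if positive weight on `u → v`
implies `g(u) ≤ g(v)`. -/
def LocallyFair [Fintype V] (o : V → V → ℝ) : Prop :=
  ∀ u v, 0 < o u v → outdeg o u ≤ outdeg o v

/-- A fractional orientation is `η`-fair if positive weight on `u → v`
implies `g(u) ≤ (1+η)·g(v)`. -/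
def EtaFair [Fintype V] (η : ℝ) (o : V → V → ℝ) : Prop :=
  ∀ u v, 0 < o u v → outdeg o u ≤ (1 + η) * outdeg o v

/-- Total weight of edges of `G` inside the vertex set `S`. -/
def edgeWeight [Fintype V] (G : SimpleGraph V) [DecidableRel G.Adj] (w : V → V → ℝ)
    (S : Finset V) : ℝ :=
  (∑ u ∈ S, ∑ v ∈ S, if G.Adj u v then w u v else 0) / 2

/-- Density of the subgraph induced on `S`. -/
def densityOn [Fintype V] (G : SimpleGraph V) [DecidableRel G.Adj] (w : V → V → ℝ)
    (S : Finset V) : ℝ :=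
  edgeWeight G w S / S.card

open MeasureTheory

lemma ind_eq' (a : ℝ) : (fun r : ℝ => if r ≤ a then (1:ℝ) else 0) = (Set.Iic a).indicator 1 := by
  funext r; simp [Set.indicator_apply]

lemma ind_integrable' (a : ℝ) :
    IntegrableOn (fun r : ℝ => if r ≤ a then (1:ℝ) else 0) (Set.Ioi 0) := by
  rw [ind_eq', IntegrableOn, integrable_indicator_iff measurableSet_Iic]
  unfold IntegrableOn
  rw [Measure.restrict_restrict measurableSet_Iic, Set.inter_comm, Set.Ioi_inter_Iic]
  exact integrableOn_const (by simp)

lemma ind_integral' (a : ℝ) (ha : 0 ≤ a) :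
    ∫ r in Set.Ioi (0:ℝ), (if r ≤ a then (1:ℝ) else 0) = a := by
  rw [ind_eq', setIntegral_indicator measurableSet_Iic, Set.Ioi_inter_Iic]
  simp [Real.volume_Ioc, ha]

/-- for a feasible LP-DS solution with positive objective value `R`,
there is a threshold `r > 0` with `V(r) = {u : x_u ≥ r}` nonempty and
`Σ_{y_{uv} ≥ r} g(uv) ≥ R·|V(r)|`. -/
theorem lp_threshold_exists [Fintype V]
    (G : SimpleGraph V) [DecidableRel G.Adj] (w : V → V → ℝ)
    (hwpos : ∀ u v, G.Adj u v → 0 < w u v) (hwsymm : ∀ u v, w u v = w v u)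
    (x : V → ℝ) (y : V → V → ℝ)
    (hx : ∀ v, 0 ≤ x v) (hy : ∀ u v, 0 ≤ y u v) (hysym : ∀ u v, y u v = y v u)
    (hxy : ∀ u v, G.Adj u v → y u v ≤ x u ∧ y u v ≤ x v)
    (hsum : ∑ v : V, x v ≤ 1)
    (R : ℝ) (hR : R = (∑ u : V, ∑ v : V, if G.Adj u v then w u v * y u v else 0) / 2)
    (hRpos : 0 < R) :
    ∃ r : ℝ, 0 < r ∧ (Finset.univ.filter fun u => r ≤ x u).Nonempty ∧
      R * ((Finset.univ.filter fun u => r ≤ x u).card : ℝ) ≤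
        (∑ u : V, ∑ v : V, if G.Adj u v ∧ r ≤ y u v then w u v else 0) / 2 := by
  by_contra hcon
  push_neg at hcon
  set S : ℝ := ∑ u : V, ∑ v : V, if G.Adj u v then w u v * y u v else 0 with hSdef
  have hS : S = 2 * R := by rw [hR]; ring
  set A : ℝ → ℝ := fun r => ∑ u : V, (if r ≤ x u then (1:ℝ) else 0) with hAdef
  set B : ℝ → ℝ := fun r => ∑ u : V, ∑ v : V,
      (if G.Adj u v then w u v else 0) * (if r ≤ y u v then (1:ℝ) else 0) with hBdef
  have hBform : ∀ r, B r = ∑ u : V, ∑ v : V, if G.Adj u v ∧ r ≤ y u v then w u v else 0 := by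
    intro r
    refine Finset.sum_congr rfl fun u _ => Finset.sum_congr rfl fun v _ => ?_
    by_cases h1 : G.Adj u v <;> by_cases h2 : r ≤ y u v <;> simp [h1, h2]
  have hAcard : ∀ r, A r = ((Finset.univ.filter fun u => r ≤ x u).card : ℝ) := by
    intro r; simp [hAdef, Finset.sum_boole]
  -- integrability
  have hAint : IntegrableOn A (Set.Ioi 0) :=
    integrable_finset_sum _ fun u _ => ind_integrable' (x u)
  have hBint : IntegrableOn B (Set.Ioi 0) :=
    integrable_finset_sum _ fun u _ =>
      integrable_finset_sum _ fun v _ => (ind_integrable' (y u v)).const_mul _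
  -- integrals
  have hAI : ∫ r in Set.Ioi (0:ℝ), A r = ∑ u : V, x u := by
    rw [hAdef, integral_finset_sum _ fun u _ => ind_integrable' (x u)]
    exact Finset.sum_congr rfl fun u _ => ind_integral' _ (hx u)
  have hBI : ∫ r in Set.Ioi (0:ℝ), B r = S := by
    rw [hBdef, integral_finset_sum _ fun u _ =>
      integrable_finset_sum _ fun v _ => (ind_integrable' (y u v)).const_mul _]
    refine Finset.sum_congr rfl fun u _ => ?_
    rw [integral_finset_sum _ fun v _ => (ind_integrable' (y u v)).const_mul _]
    refine Finset.sum_congr rfl fun v _ => ?_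
    rw [MeasureTheory.integral_const_mul, ind_integral' _ (hy u v)]
    by_cases h1 : G.Adj u v <;> simp [h1]
  -- the gap function
  set g : ℝ → ℝ := fun r => R * A r - B r / 2 with hgdef
  have hgint : IntegrableOn g (Set.Ioi 0) := (hAint.const_mul R).sub (hBint.div_const 2)
  have hgI : ∫ r in Set.Ioi (0:ℝ), g r = R * (∑ u : V, x u) - S / 2 := by
    rw [hgdef]
    rw [integral_sub (hAint.const_mul R) (hBint.div_const 2),
      MeasureTheory.integral_const_mul, integral_div, hAI, hBI]
  -- pointwise facts
  have hBzero : ∀ r : ℝ, ¬ (Finset.univ.filter fun u => r ≤ x u).Nonempty → B r = 0 := by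
    intro r hne
    rw [Finset.not_nonempty_iff_eq_empty, Finset.filter_eq_empty_iff] at hne
    rw [hBform]
    refine Finset.sum_eq_zero fun u _ => Finset.sum_eq_zero fun v _ => ?_
    rw [if_neg]
    rintro ⟨hadj, hry⟩
    exact hne (Finset.mem_univ u) (le_trans hry (hxy u v hadj).1)
  have hgnn : ∀ r ∈ Set.Ioi (0:ℝ), 0 ≤ g r := by
    intro r hr
    have hgr : g r = R * A r - B r / 2 := rfl
    by_cases hne : (Finset.univ.filter fun u => r ≤ x u).Nonempty
    · rw [hgr, hAcard, hBform]
      linarith [hcon r hr hne]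
    · rw [hgr, hBzero r hne, hAcard]
      have : (Finset.univ.filter fun u => r ≤ x u).card = 0 := by
        rw [Finset.not_nonempty_iff_eq_empty] at hne; simp [hne]
      simp [this]
  have hgpos : ∀ r ∈ Set.Ioi (0:ℝ), (Finset.univ.filter fun u => r ≤ x u).Nonempty → 0 < g r := by
    intro r hr hne
    have hgr : g r = R * A r - B r / 2 := rfl
    rw [hgr, hAcard, hBform]
    linarith [hcon r hr hne]
  -- find a vertex with positive x
  have hSpos : 0 < S := by rw [hS]; linarith
  obtain ⟨u0, -, hu0⟩ := Finset.exists_lt_of_sum_lt (by simpa using hSpos :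
    ∑ _u : V, (0:ℝ) < ∑ u : V, ∑ v : V, if G.Adj u v then w u v * y u v else 0)
  obtain ⟨v0, -, hv0⟩ := Finset.exists_lt_of_sum_lt (by simpa using hu0 :
    ∑ _v : V, (0:ℝ) < ∑ v : V, if G.Adj u0 v then w u0 v * y u0 v else 0)
  have hadj0 : G.Adj u0 v0 := by by_contra h; simp [h] at hv0
  have hy0 : 0 < y u0 v0 := by
    rw [if_pos hadj0] at hv0
    by_contra h
    push_neg at h
    nlinarith [hwpos u0 v0 hadj0, hy u0 v0]
  set M : ℝ := x u0 with hMdef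
  have hM : 0 < M := lt_of_lt_of_le hy0 (hxy u0 v0 hadj0).1
  -- strict positivity on Ioc 0 M
  have hposIoc : ∀ r ∈ Set.Ioc (0:ℝ) M, 0 < g r := by
    intro r hr
    refine hgpos r hr.1 ⟨u0, ?_⟩
    simp; exact hr.2
  have hsub : Set.Ioc (0:ℝ) M ⊆ Set.Ioi 0 := Set.Ioc_subset_Ioi_self
  have hI1 : 0 < ∫ r in Set.Ioc (0:ℝ) M, g r := by
    rw [setIntegral_pos_iff_support_of_nonneg_ae
      (ae_restrict_of_forall_mem measurableSet_Ioc fun r hr => (hposIoc r hr).le)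
      (hgint.mono_set hsub)]
    have : Function.support g ∩ Set.Ioc 0 M = Set.Ioc 0 M := by
      apply Set.inter_eq_self_of_subset_right
      intro r hr
      exact (hposIoc r hr).ne'
    rw [this]
    simp [Real.volume_Ioc, hM]
  have hI2 : ∫ r in Set.Ioc (0:ℝ) M, g r ≤ ∫ r in Set.Ioi (0:ℝ), g r :=
    setIntegral_mono_set hgint
      (ae_restrict_of_forall_mem measurableSet_Ioi hgnn) hsub.eventuallyLE
  have hI3 : ∫ r in Set.Ioi (0:ℝ), g r ≤ 0 := by
    rw [hgI, hS]
    nlinarith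
  linarith
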